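/- Let f : ℝⁿ → ℝⁿ be continuous and suppose every zero of f is an isolated point of the zero set {y : f(y) = 0}. Let h : [0,∞) × ℝⁿ → ℝⁿ be continuous and satisfy: (i) h(0, x) ≠ x for every x ∈ ℝⁿ, and (ii) for every x ∈ ℝⁿ, lim_{t→∞} h(t, x) = x. Then there is no point x* ∈ ℝⁿ such that f(h(t, x*)) = 0 for all t ≥ 0; i.e., the masked system ẋ = f(h(t, x)) has no equilibrium point. -/

import Mathlib

open Set Filter Topology

/-- **Proposition 1 (no equilibria of the masked system).**
Let `f : ℝⁿ → ℝⁿ` be continuous with every zero of `f` an isolated point of the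
zero set `{y | f y = 0}`. Let `h : [0,∞) × ℝⁿ → ℝⁿ` be continuous with
`h 0 x ≠ x` for every `x` (property P2, the mask alters every state at time 0) and
`h t x → x` as `t → ∞` for every `x` (property P6, the mask is vanishing).
Then there is no point `x*` with `f (h t x*) = 0` for all `t ≥ 0`; i.e. the masked
system `ẋ = f (h t x)` has no equilibrium point. -/
theorem masked_system_has_no_equilibrium
    (n : ℕ) (f : (Fin n → ℝ) → (Fin n → ℝ)) (h : ℝ → (Fin n → ℝ) → (Fin n → ℝ))
    (hf_cont : Continuous f)
    (hf_isolated : ∀ y : Fin n → ℝ, f y = 0 →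
      ∃ U ∈ nhds y, ∀ z ∈ U, f z = 0 → z = y)
    (hh_cont : ContinuousOn (fun p : ℝ × (Fin n → ℝ) => h p.1 p.2)
      (Set.Ici (0 : ℝ) ×ˢ Set.univ))
    (hh_zero : ∀ x : Fin n → ℝ, h 0 x ≠ x)
    (hh_vanish : ∀ x : Fin n → ℝ,
      Filter.Tendsto (fun t => h t x) Filter.atTop (nhds x)) :
    ¬ ∃ xstar : Fin n → ℝ, ∀ t : ℝ, 0 ≤ t → f (h t xstar) = 0 := by
  rintro ⟨x, hx⟩
  set g : ℝ → (Fin n → ℝ) := fun t => h t x with hg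
  have hgc : ContinuousOn g (Ici 0) := by
    have hmap : ContinuousOn (fun t : ℝ => ((t, x) : ℝ × (Fin n → ℝ))) (Ici 0) :=
      (continuous_id.prodMk continuous_const).continuousOn
    exact hh_cont.comp hmap (fun t ht => ⟨ht, mem_univ _⟩)
  -- f x = 0
  have hfx : f x = 0 := by
    have h1 : Tendsto (fun t => f (g t)) atTop (nhds (f x)) :=
      (hf_cont.continuousAt.tendsto).comp (hh_vanish x)
    have h2 : (fun t => f (g t)) =ᶠ[atTop] fun _ => (0 : Fin n → ℝ) := by
      filter_upwards [eventually_ge_atTop (0 : ℝ)] with t ht using hx t ht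
    exact tendsto_nhds_unique (h1.congr' h2) tendsto_const_nhds
  obtain ⟨U, hU, hUz⟩ := hf_isolated x hfx
  -- work in the subtype Ici 0, which is preconnected
  haveI : PreconnectedSpace (Ici (0 : ℝ)) :=
    Subtype.preconnectedSpace isPreconnected_Ici
  have hres : Continuous ((Ici (0 : ℝ)).restrict g) :=
    continuousOn_iff_continuous_restrict.mp hgc
  set S : Set (Ici (0 : ℝ)) := {t | g t = x} with hS
  have hSclosed : IsClosed S := by
    have : S = (Ici (0 : ℝ)).restrict g ⁻¹' {x} := rfl
    rw [this]
    exact isClosed_singleton.preimage hres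
  have hSopen : IsOpen S := by
    rw [isOpen_iff_mem_nhds]
    rintro t ht
    have hgt : g t = x := ht
    have hUt : (Ici (0 : ℝ)).restrict g ⁻¹' U ∈ nhds t := by
      apply hres.continuousAt.preimage_mem_nhds
      show U ∈ nhds ((Ici (0:ℝ)).restrict g t)
      rw [show (Ici (0:ℝ)).restrict g t = x from hgt]
      exact hU
    filter_upwards [hUt] with s hs
    exact hUz (g s) hs (hx s s.2)
  have hSne : S.Nonempty := by
    have : ∀ᶠ t in atTop, g t ∈ U := (hh_vanish x).eventually_mem hU
    obtain ⟨T, hT0, hTU⟩ := ((eventually_ge_atTop (0 : ℝ)).and this).exists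
    exact ⟨⟨T, hT0⟩, hUz (g T) hTU (hx T hT0)⟩
  have hSuniv : S = univ := (IsClopen.eq_univ ⟨hSclosed, hSopen⟩) hSne
  have h0 : (⟨0, self_mem_Ici⟩ : Ici (0 : ℝ)) ∈ S := hSuniv ▸ mem_univ _
  exact hh_zero x h0
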